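/- (Gauge transformation reducing a phased CMV operator to an ordinary CMV operator.) Let α : ℤ → ℂ with |α_n| < 1 and λ : ℤ → ℂ with |λ_n| = 1 for all n. Define γ : ℤ → ℂ by γ_0 = γ_1 = 1 and the two-sided recursions γ_{2n+2} = λ_{2n+1}λ_{2n}γ_{2n} and γ_{2n+1} = conj(λ_{2n}λ_{2n−1})γ_{2n−1} for all n ∈ ℤ, and let Γ be the diagonal unitary operator on ℓ²(ℤ,ℂ) with Γδ_n = γ_n·δ_n. Then Γ·ℰ_{α,λ}·Γ* = ℰ_{α',1}, the phased CMV operator with all phases equal to 1 (an ordinary extended CMV matrix) and coefficients α'_{2n−1} = λ_{2n}λ_{2n−1}·γ_{2n+1}·conj(γ_{2n})·α_{2n−1} and α'_{2n} = conj(λ_{2n}λ_{2n−1}γ_{2n})·γ_{2n−1}·α_{2n} for all n ∈ ℤ (note |α'_n| = |α_n|). -/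

import Mathlib

noncomputable section
open scoped ENNReal
open MeasureTheory

/-- The Hilbert space ℓ²(ℤ, ℂ). -/
abbrev l2Z := lp (fun _ : ℤ => ℂ) 2

/-- ρ = √(1 − |α|²). -/
def rho (w : ℂ) : ℝ := Real.sqrt (1 - ‖w‖ ^ 2)

/-- `L` acts as the direct sum of the blocks Θ(α_{2j}, λ_{2j}). -/
def IsLOp (a lam : ℤ → ℂ) (L : l2Z →L[ℂ] l2Z) : Prop :=
  ∀ (u : l2Z) (j : ℤ),
    L u (2 * j) = lam (2 * j) *
        ((starRingEnd ℂ) (a (2 * j)) * u (2 * j) + (rho (a (2 * j)) : ℂ) * u (2 * j + 1)) ∧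
    L u (2 * j + 1) = lam (2 * j) *
        ((rho (a (2 * j)) : ℂ) * u (2 * j) - a (2 * j) * u (2 * j + 1))

/-- `M` acts as the direct sum of the blocks Θ(α_{2j+1}, λ_{2j+1}). -/
def IsMOp (a lam : ℤ → ℂ) (M : l2Z →L[ℂ] l2Z) : Prop :=
  ∀ (u : l2Z) (j : ℤ),
    M u (2 * j + 1) = lam (2 * j + 1) *
        ((starRingEnd ℂ) (a (2 * j + 1)) * u (2 * j + 1) +
          (rho (a (2 * j + 1)) : ℂ) * u (2 * j + 2)) ∧
    M u (2 * j + 2) = lam (2 * j + 1) *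
        ((rho (a (2 * j + 1)) : ℂ) * u (2 * j + 1) - a (2 * j + 1) * u (2 * j + 2))

/-- `E` is the phased CMV operator ℰ_{α,λ} = ℒℳ. -/
def IsPCMV (a lam : ℤ → ℂ) (E : l2Z →L[ℂ] l2Z) : Prop :=
  (∀ n, ‖a n‖ < 1) ∧ (∀ n, ‖lam n‖ = 1) ∧
    ∃ L M : l2Z →L[ℂ] l2Z, IsLOp a lam L ∧ IsMOp a lam M ∧ E = L.comp M

/-- P(q, r): q-periodic phased CMV operators with ‖α‖∞ ≤ r. -/
def PCMVPer (q : ℕ) (r : ℝ) : Set (l2Z →L[ℂ] l2Z) :=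
  {E | ∃ a lam : ℤ → ℂ, IsPCMV a lam E ∧
        (∀ n : ℤ, a (n + q) = a n ∧ lam (n + q) = lam n) ∧
        ∀ n, ‖a n‖ ≤ r}

/-- P(r): periodic phased CMV operators with ‖α‖∞ ≤ r. -/
def PCMVPeriodic (r : ℝ) : Set (l2Z →L[ℂ] l2Z) := ⋃ q ∈ Set.Ici 1, PCMVPer q r

/-- LP(r): norm closure of P(r). -/
def LPr (r : ℝ) : Set (l2Z →L[ℂ] l2Z) := closure (PCMVPeriodic r)

/-- LP: the space of limit-periodic phased CMV operators. -/
def LP : Set (l2Z →L[ℂ] l2Z) := ⋃ r ∈ Set.Ioo (0 : ℝ) 1, LPr r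

/-- Arc-length measure on the unit circle ∂𝔻 ⊆ ℂ, the pushforward of Lebesgue
measure on [0, 2π) under τ ↦ e^{iτ}. -/
def circleLeb : Measure ℂ :=
  Measure.map (fun τ : ℝ => Complex.exp (Complex.I * τ))
    (volume.restrict (Set.Ico 0 (2 * Real.pi)))

open ContinuousLinearMap in
lemma diag_adjoint_apply (γ : ℤ → ℂ) (Γ : l2Z →L[ℂ] l2Z)
    (hΓ : ∀ (u : l2Z) (n : ℤ), Γ u n = γ n * u n) (u : l2Z) (n : ℤ) :
    (ContinuousLinearMap.adjoint Γ) u n = (starRingEnd ℂ) (γ n) * u n := by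
  have h1 : Γ (lp.single 2 n (1:ℂ)) = lp.single 2 n (γ n) := by
    apply lp.ext; funext m
    rw [hΓ]
    by_cases h : m = n
    · subst h; simp [lp.single_apply_self]
    · simp [lp.single_apply_ne _ _ _ h, Pi.single_apply, h]
  have h2 := ContinuousLinearMap.adjoint_inner_right Γ (lp.single 2 n (1:ℂ)) u
  rw [h1, lp.inner_single_left, lp.inner_single_left] at h2
  simp [RCLike.inner_apply] at h2
  rw [h2, mul_comm]


lemma gamma_abs (lam γ : ℤ → ℂ) (hl : ∀ n, ‖lam n‖ = 1)
    (hγ0 : γ 0 = 1) (hγ1 : γ 1 = 1)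
    (hγeven : ∀ n : ℤ, γ (2 * n + 2) = lam (2 * n + 1) * lam (2 * n) * γ (2 * n))
    (hγodd : ∀ n : ℤ,
      γ (2 * n + 1) = (starRingEnd ℂ) (lam (2 * n) * lam (2 * n - 1)) * γ (2 * n - 1)) :
    ∀ n, ‖γ n‖ = 1 := by
  have heven : ∀ k : ℤ, ‖γ (2 * k)‖ = 1 := by
    intro k
    induction k using Int.induction_on with
    | zero => norm_num [hγ0]
    | succ i ih =>
      rw [show (2 * ((i : ℤ) + 1)) = 2 * (i : ℤ) + 2 by ring, hγeven, norm_mul, norm_mul,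
        hl, hl, ih]; norm_num
    | pred i ih =>
      have h := hγeven (-(i : ℤ) - 1)
      rw [show (2 * (-(i : ℤ) - 1) + 2) = 2 * (-(i : ℤ)) by ring] at h
      have h2 := congrArg norm h
      rw [norm_mul, norm_mul, hl, hl, one_mul, one_mul, ih] at h2
      exact h2.symm
  have hodd : ∀ k : ℤ, ‖γ (2 * k + 1)‖ = 1 := by
    intro k
    induction k using Int.induction_on with
    | zero => norm_num [hγ1]
    | succ i ih =>
      have h := hγodd ((i : ℤ) + 1)
      rw [show (2 * ((i : ℤ) + 1) - 1) = 2 * (i : ℤ) + 1 by ring] at h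
      rw [h]; simp [norm_mul, Complex.norm_conj, hl, ih]
    | pred i ih =>
      have h := hγodd (-(i : ℤ))
      rw [show (2 * (-(i : ℤ)) - 1) = 2 * (-(i : ℤ) - 1) + 1 by ring] at h
      have ih' : ‖γ (-(2 * (i : ℤ)) + 1)‖ = 1 := by
        rw [show (-(2 * (i : ℤ)) + 1) = 2 * -(i : ℤ) + 1 by ring]; exact ih
      have h2 := congrArg norm h
      simpa [norm_mul, Complex.norm_conj, hl, ih'] using h2.symm
  intro n
  obtain ⟨k, hk | hk⟩ := Int.even_or_odd' n
  · rw [hk]; exact heven k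
  · rw [hk]; exact hodd k


set_option maxHeartbeats 1600000

/-- gauge transformation. With γ defined by γ_0 = γ_1 = 1,
γ_{2n+2} = λ_{2n+1}λ_{2n}γ_{2n}, γ_{2n+1} = conj(λ_{2n}λ_{2n−1})γ_{2n−1}, and Γ the
diagonal operator Γδ_n = γ_n δ_n, one has Γ·ℰ_{α,λ}·Γ* = ℰ_{α′,1} with the indicated
coefficients α′. -/
theorem gauge_transformation
    (a lam : ℤ → ℂ)
    (ha : ∀ n, ‖a n‖ < 1) (hl : ∀ n, ‖lam n‖ = 1)
    (γ : ℤ → ℂ) (hγ0 : γ 0 = 1) (hγ1 : γ 1 = 1)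
    (hγeven : ∀ n : ℤ, γ (2 * n + 2) = lam (2 * n + 1) * lam (2 * n) * γ (2 * n))
    (hγodd : ∀ n : ℤ,
      γ (2 * n + 1) = (starRingEnd ℂ) (lam (2 * n) * lam (2 * n - 1)) * γ (2 * n - 1))
    (Γ : l2Z →L[ℂ] l2Z) (hΓ : ∀ (u : l2Z) (n : ℤ), Γ u n = γ n * u n)
    (a' : ℤ → ℂ)
    (ha'odd : ∀ n : ℤ, a' (2 * n - 1) =
      lam (2 * n) * lam (2 * n - 1) * γ (2 * n + 1) * (starRingEnd ℂ) (γ (2 * n)) *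
        a (2 * n - 1))
    (ha'even : ∀ n : ℤ, a' (2 * n) =
      (starRingEnd ℂ) (lam (2 * n) * lam (2 * n - 1) * γ (2 * n)) * γ (2 * n - 1) *
        a (2 * n))
    (E E' : l2Z →L[ℂ] l2Z)
    (hE : IsPCMV a lam E) (hE' : IsPCMV a' (fun _ => 1) E') :
    Γ.comp (E.comp (ContinuousLinearMap.adjoint Γ)) = E' := by
  obtain ⟨-, -, L, M, hL, hM, rfl⟩ := hE
  obtain ⟨ha', -, L', M', hL', hM', rfl⟩ := hE'
  have hγabs : ∀ n, ‖γ n‖ = 1 := gamma_abs lam γ hl hγ0 hγ1 hγeven hγodd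
  have hadj : ∀ (u : l2Z) (n : ℤ),
      (ContinuousLinearMap.adjoint Γ) u n = (starRingEnd ℂ) (γ n) * u n :=
    diag_adjoint_apply γ Γ hΓ
  have hc : ∀ z : ℂ, ‖z‖ = 1 → (starRingEnd ℂ) z = z⁻¹ := by
    intro z h
    refine eq_inv_of_mul_eq_one_right ?_
    rw [Complex.mul_conj, Complex.normSq_eq_norm_sq, h]; norm_num
  have hnz : ∀ z : ℂ, ‖z‖ = 1 → z ≠ 0 := by
    intro z h h0; rw [h0] at h; simp at h
  have hρ : ∀ n, rho (a' n) = rho (a n) := by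
    have habs : ∀ n, ‖a' n‖ = ‖a n‖ := by
      intro n
      obtain ⟨k, hk | hk⟩ := Int.even_or_odd' n
      · rw [hk, ha'even k]
        simp [norm_mul, Complex.norm_conj, hl, hγabs]
      · have h := ha'odd (k + 1)
        rw [show 2 * (k + 1) - 1 = 2 * k + 1 by ring] at h
        rw [hk, h]
        simp [norm_mul, Complex.norm_conj, hl, hγabs]
    intro n; unfold rho; rw [habs]
  refine ContinuousLinearMap.ext fun u => lp.ext (funext fun n => ?_)
  simp only [ContinuousLinearMap.comp_apply]
  rw [hΓ]
  -- components of M (Γ† u)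
  have hM2j : ∀ j : ℤ, M (ContinuousLinearMap.adjoint Γ u) (2 * j) =
      lam (2 * j - 1) * ((rho (a (2 * j - 1)) : ℂ) *
        ((starRingEnd ℂ) (γ (2 * j - 1)) * u (2 * j - 1)) -
        a (2 * j - 1) * ((starRingEnd ℂ) (γ (2 * j)) * u (2 * j))) := by
    intro j
    have h := (hM (ContinuousLinearMap.adjoint Γ u) (j - 1)).2
    rw [show 2 * (j - 1) + 2 = 2 * j by ring, show 2 * (j - 1) + 1 = 2 * j - 1 by ring] at h
    rw [h, hadj, hadj]
  have hM2j1 : ∀ j : ℤ, M (ContinuousLinearMap.adjoint Γ u) (2 * j + 1) =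
      lam (2 * j + 1) * ((starRingEnd ℂ) (a (2 * j + 1)) *
        ((starRingEnd ℂ) (γ (2 * j + 1)) * u (2 * j + 1)) +
        (rho (a (2 * j + 1)) : ℂ) * ((starRingEnd ℂ) (γ (2 * j + 2)) * u (2 * j + 2))) := by
    intro j
    have h := (hM (ContinuousLinearMap.adjoint Γ u) j).1
    rw [h, hadj, hadj]
  have hM'2j : ∀ j : ℤ, M' u (2 * j) =
      (rho (a' (2 * j - 1)) : ℂ) * u (2 * j - 1) - a' (2 * j - 1) * u (2 * j) := by
    intro j
    have h := (hM' u (j - 1)).2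
    rw [show 2 * (j - 1) + 2 = 2 * j by ring, show 2 * (j - 1) + 1 = 2 * j - 1 by ring] at h
    rw [h, one_mul]
  have hM'2j1 : ∀ j : ℤ, M' u (2 * j + 1) =
      (starRingEnd ℂ) (a' (2 * j + 1)) * u (2 * j + 1) +
        (rho (a' (2 * j + 1)) : ℂ) * u (2 * j + 2) := by
    intro j
    have h := (hM' u j).1
    rw [h, one_mul]
  -- a' values
  have ha'1 : ∀ j : ℤ, a' (2 * j - 1) =
      lam (2 * j) * lam (2 * j - 1) * γ (2 * j + 1) * (starRingEnd ℂ) (γ (2 * j)) *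
        a (2 * j - 1) := ha'odd
  have ha'3 : ∀ j : ℤ, a' (2 * j + 1) =
      lam (2 * j + 2) * lam (2 * j + 1) * γ (2 * j + 3) * (starRingEnd ℂ) (γ (2 * j + 2)) *
        a (2 * j + 1) := by
    intro j
    have h := ha'odd (j + 1)
    rw [show 2 * (j + 1) + 1 = 2 * j + 3 by ring, show 2 * (j + 1) - 1 = 2 * j + 1 by ring,
      show (2 * (j + 1) : ℤ) = 2 * j + 2 by ring] at h
    exact h
  have hγ3 : ∀ j : ℤ, γ (2 * j + 3) =
      (starRingEnd ℂ) (lam (2 * j + 2) * lam (2 * j + 1)) * γ (2 * j + 1) := by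
    intro j
    have h := hγodd (j + 1)
    rw [show 2 * (j + 1) + 1 = 2 * j + 3 by ring, show 2 * (j + 1) - 1 = 2 * j + 1 by ring,
      show (2 * (j + 1) : ℤ) = 2 * j + 2 by ring] at h
    exact h
  obtain ⟨j, hj | hj⟩ := Int.even_or_odd' n <;> subst hj
  · rw [(hL _ j).1, (hL' _ j).1, hM2j j, hM2j1 j, hM'2j j, hM'2j1 j, one_mul]
    simp only [hρ]
    rw [ha'1 j, ha'even j, ha'3 j, hγ3 j, hγeven j, hγodd j]
    simp only [map_mul, map_inv₀, inv_inv, Complex.conj_conj, Complex.conj_ofReal,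
      hc _ (hγabs (2 * j - 1)), hc _ (hγabs (2 * j)),
      hc _ (hl (2 * j - 1)), hc _ (hl (2 * j)), hc _ (hl (2 * j + 1)), hc _ (hl (2 * j + 2))]
    have n1 : γ (2 * j - 1) ≠ 0 := hnz _ (hγabs _)
    have n2 : γ (2 * j) ≠ 0 := hnz _ (hγabs _)
    have n3 : lam (2 * j - 1) ≠ 0 := hnz _ (hl _)
    have n4 : lam (2 * j) ≠ 0 := hnz _ (hl _)
    have n5 : lam (2 * j + 1) ≠ 0 := hnz _ (hl _)
    have n6 : lam (2 * j + 2) ≠ 0 := hnz _ (hl _)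
    have h1 : γ (2 * j - 1) * (γ (2 * j - 1))⁻¹ = 1 := mul_inv_cancel₀ n1
    have h2 : γ (2 * j) * (γ (2 * j))⁻¹ = 1 := mul_inv_cancel₀ n2
    have h3 : lam (2 * j - 1) * (lam (2 * j - 1))⁻¹ = 1 := mul_inv_cancel₀ n3
    have h4 : lam (2 * j) * (lam (2 * j))⁻¹ = 1 := mul_inv_cancel₀ n4
    have h5 : lam (2 * j + 1) * (lam (2 * j + 1))⁻¹ = 1 := mul_inv_cancel₀ n5
    have h6 : lam (2 * j + 2) * (lam (2 * j + 2))⁻¹ = 1 := mul_inv_cancel₀ n6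
    linear_combination
      ((γ (2 * j)) * (lam (2 * j - 1)) ^ 2 * (lam (2 * j)) ^ 2 * (γ (2 * j))⁻¹ * (lam (2 * j - 1))⁻¹ * (lam (2 * j))⁻¹ * ((starRingEnd ℂ) (a (2 * j))) * (a (2 * j - 1)) * (u (2 * j))) * h1 +
      ((lam (2 * j)) * (lam (2 * j + 1)) * (lam (2 * j))⁻¹ * (lam (2 * j + 1))⁻¹ * ((rho (a (2 * j)) : ℝ) : ℂ) * ((rho (a (2 * j + 1)) : ℝ) : ℂ) * (u (2 * j + 2)) - (lam (2 * j - 1)) * (lam (2 * j)) * ((starRingEnd ℂ) (a (2 * j))) * (a (2 * j - 1)) * (u (2 * j)) + (lam (2 * j - 1)) ^ 2 * (lam (2 * j)) ^ 2 * (lam (2 * j - 1))⁻¹ * (lam (2 * j))⁻¹ * ((starRingEnd ℂ) (a (2 * j))) * (a (2 * j - 1)) * (u (2 * j))) * h2 +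
      ((lam (2 * j - 1)) * (lam (2 * j)) ^ 2 * (lam (2 * j))⁻¹ * ((starRingEnd ℂ) (a (2 * j))) * (a (2 * j - 1)) * (u (2 * j))) * h3 +
      ((lam (2 * j + 1)) * (lam (2 * j + 1))⁻¹ * ((rho (a (2 * j)) : ℝ) : ℂ) * ((rho (a (2 * j + 1)) : ℝ) : ℂ) * (u (2 * j + 2)) + (lam (2 * j - 1)) * (lam (2 * j)) * ((starRingEnd ℂ) (a (2 * j))) * (a (2 * j - 1)) * (u (2 * j))) * h4 +
      (((rho (a (2 * j)) : ℝ) : ℂ) * ((rho (a (2 * j + 1)) : ℝ) : ℂ) * (u (2 * j + 2)) - (γ (2 * j)) * (lam (2 * j - 1)) * (lam (2 * j)) ^ 2 * (lam (2 * j + 1)) * (lam (2 * j + 2)) * (γ (2 * j - 1))⁻¹ * (lam (2 * j + 2))⁻¹ * ((starRingEnd ℂ) (a (2 * j + 1))) * ((rho (a (2 * j)) : ℝ) : ℂ) * (u (2 * j + 1))) * h5 +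
      (-(γ (2 * j)) * (lam (2 * j - 1)) * (lam (2 * j)) ^ 2 * (lam (2 * j + 1)) * (γ (2 * j - 1))⁻¹ * ((starRingEnd ℂ) (a (2 * j + 1))) * ((rho (a (2 * j)) : ℝ) : ℂ) * (u (2 * j + 1))) * h6
  · rw [(hL _ j).2, (hL' _ j).2, hM2j j, hM2j1 j, hM'2j j, hM'2j1 j, one_mul]
    simp only [hρ]
    rw [ha'1 j, ha'even j, ha'3 j, hγ3 j, hγeven j, hγodd j]
    simp only [map_mul, map_inv₀, inv_inv, Complex.conj_conj, Complex.conj_ofReal,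
      hc _ (hγabs (2 * j - 1)), hc _ (hγabs (2 * j)),
      hc _ (hl (2 * j - 1)), hc _ (hl (2 * j)), hc _ (hl (2 * j + 1)), hc _ (hl (2 * j + 2))]
    have n1 : γ (2 * j - 1) ≠ 0 := hnz _ (hγabs _)
    have n2 : γ (2 * j) ≠ 0 := hnz _ (hγabs _)
    have n3 : lam (2 * j - 1) ≠ 0 := hnz _ (hl _)
    have n4 : lam (2 * j) ≠ 0 := hnz _ (hl _)
    have n5 : lam (2 * j + 1) ≠ 0 := hnz _ (hl _)
    have n6 : lam (2 * j + 2) ≠ 0 := hnz _ (hl _)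
    have h1 : γ (2 * j - 1) * (γ (2 * j - 1))⁻¹ = 1 := mul_inv_cancel₀ n1
    have h2 : γ (2 * j) * (γ (2 * j))⁻¹ = 1 := mul_inv_cancel₀ n2
    have h3 : lam (2 * j - 1) * (lam (2 * j - 1))⁻¹ = 1 := mul_inv_cancel₀ n3
    have h4 : lam (2 * j) * (lam (2 * j))⁻¹ = 1 := mul_inv_cancel₀ n4
    have h5 : lam (2 * j + 1) * (lam (2 * j + 1))⁻¹ = 1 := mul_inv_cancel₀ n5
    have h6 : lam (2 * j + 2) * (lam (2 * j + 2))⁻¹ = 1 := mul_inv_cancel₀ n6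
    linear_combination
      ((lam (2 * j - 1)) * (lam (2 * j)) * (lam (2 * j - 1))⁻¹ * (lam (2 * j))⁻¹ * ((rho (a (2 * j - 1)) : ℝ) : ℂ) * ((rho (a (2 * j)) : ℝ) : ℂ) * (u (2 * j - 1)) - (lam (2 * j - 1)) * (lam (2 * j)) ^ 2 * (lam (2 * j + 1)) * (lam (2 * j - 1))⁻¹ * (lam (2 * j))⁻¹ * ((starRingEnd ℂ) (a (2 * j + 1))) * (a (2 * j)) * (u (2 * j + 1)) + (γ (2 * j)) * (lam (2 * j - 1)) * (lam (2 * j)) ^ 2 * (lam (2 * j + 1)) ^ 2 * (lam (2 * j + 2)) * (γ (2 * j))⁻¹ * (lam (2 * j - 1))⁻¹ * (lam (2 * j))⁻¹ * (lam (2 * j + 1))⁻¹ * (lam (2 * j + 2))⁻¹ * ((starRingEnd ℂ) (a (2 * j + 1))) * (a (2 * j)) * (u (2 * j + 1))) * h1 +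
      ((lam (2 * j - 1)) * (lam (2 * j)) ^ 2 * (lam (2 * j + 1)) ^ 2 * (lam (2 * j + 2)) * (lam (2 * j - 1))⁻¹ * (lam (2 * j))⁻¹ * (lam (2 * j + 1))⁻¹ * (lam (2 * j + 2))⁻¹ * ((starRingEnd ℂ) (a (2 * j + 1))) * (a (2 * j)) * (u (2 * j + 1))) * h2 +
      ((lam (2 * j)) * (lam (2 * j))⁻¹ * ((rho (a (2 * j - 1)) : ℝ) : ℂ) * ((rho (a (2 * j)) : ℝ) : ℂ) * (u (2 * j - 1)) - (lam (2 * j)) ^ 2 * (lam (2 * j + 1)) * (lam (2 * j))⁻¹ * ((starRingEnd ℂ) (a (2 * j + 1))) * (a (2 * j)) * (u (2 * j + 1)) + (lam (2 * j)) ^ 2 * (lam (2 * j + 1)) ^ 2 * (lam (2 * j + 2)) * (lam (2 * j))⁻¹ * (lam (2 * j + 1))⁻¹ * (lam (2 * j + 2))⁻¹ * ((starRingEnd ℂ) (a (2 * j + 1))) * (a (2 * j)) * (u (2 * j + 1))) * h3 +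
      (((rho (a (2 * j - 1)) : ℝ) : ℂ) * ((rho (a (2 * j)) : ℝ) : ℂ) * (u (2 * j - 1)) - (lam (2 * j)) * (lam (2 * j + 1)) * ((starRingEnd ℂ) (a (2 * j + 1))) * (a (2 * j)) * (u (2 * j + 1)) + (lam (2 * j)) * (lam (2 * j + 1)) ^ 2 * (lam (2 * j + 2)) * (lam (2 * j + 1))⁻¹ * (lam (2 * j + 2))⁻¹ * ((starRingEnd ℂ) (a (2 * j + 1))) * (a (2 * j)) * (u (2 * j + 1)) - (γ (2 * j - 1)) * (lam (2 * j + 1)) * (γ (2 * j))⁻¹ * (lam (2 * j - 1))⁻¹ * (lam (2 * j))⁻¹ * (lam (2 * j + 1))⁻¹ * (a (2 * j)) * ((rho (a (2 * j + 1)) : ℝ) : ℂ) * (u (2 * j + 2))) * h4 +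
      ((lam (2 * j)) * (lam (2 * j + 1)) * (lam (2 * j + 2)) * (lam (2 * j + 2))⁻¹ * ((starRingEnd ℂ) (a (2 * j + 1))) * (a (2 * j)) * (u (2 * j + 1)) - (γ (2 * j - 1)) * (γ (2 * j))⁻¹ * (lam (2 * j - 1))⁻¹ * (lam (2 * j))⁻¹ * (a (2 * j)) * ((rho (a (2 * j + 1)) : ℝ) : ℂ) * (u (2 * j + 2))) * h5 +
      ((lam (2 * j)) * (lam (2 * j + 1)) * ((starRingEnd ℂ) (a (2 * j + 1))) * (a (2 * j)) * (u (2 * j + 1))) * h6
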